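/- Let a ∈ ℝ and b ∈ (0,1], and set α = (1+b+ia)/(1+b−ia), β = (1−b+ia)/(1+b+ia), ψ(z) = α(z−β)/(1−β̄z). Then ψ is a holomorphic automorphism of the open unit disc 𝔻, and for every M > 0, the inverse map ψ⁻¹ maps the Stolz-type region {z ∈ 𝔻 : |1−z|² < M(1−|z|²)} into itself. -/

import Mathlib

open Complex Metric Set

lemma denom_ne {β z : ℂ} (hβ : ‖β‖ < 1) (hz : ‖z‖ < 1) :
    1 - (starRingEnd ℂ) β * z ≠ 0 := by
  intro h
  have h1 : (1:ℂ) = (starRingEnd ℂ) β * z := by rwa [sub_eq_zero] at h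
  have h2 : ‖(starRingEnd ℂ) β * z‖ < 1 := by
    rw [norm_mul, Complex.norm_conj]
    nlinarith [norm_nonneg β, norm_nonneg z]
  rw [← h1] at h2; simp at h2

lemma bb_ne {β : ℂ} (hβ : ‖β‖ < 1) : (1:ℂ) - β * (starRingEnd ℂ) β ≠ 0 := by
  intro h
  have h1 : (1:ℂ) = β * (starRingEnd ℂ) β := by rwa [sub_eq_zero] at h
  have h2 : ‖β * (starRingEnd ℂ) β‖ < 1 := by
    rw [norm_mul, Complex.norm_conj]
    nlinarith [norm_nonneg β]
  rw [← h1] at h2; simp at h2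

lemma aa_one {α : ℂ} (hα : ‖α‖ = 1) : (starRingEnd ℂ) α * α = 1 := by
  rw [mul_comm, Complex.mul_conj]
  norm_cast
  rw [← Complex.sq_norm, hα]; norm_num

lemma mob_abs_lt {α β z : ℂ} (hα : ‖α‖ = 1) (hβ : ‖β‖ < 1)
    (hz : ‖z‖ < 1) :
    ‖α * (z - β) / (1 - (starRingEnd ℂ) β * z)‖ < 1 := by
  have hd := denom_ne hβ hz
  have hdpos : 0 < ‖1 - (starRingEnd ℂ) β * z‖ := norm_pos_iff.mpr hd
  rw [norm_div, norm_mul, hα, one_mul, div_lt_one hdpos]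
  have key : ‖1 - (starRingEnd ℂ) β * z‖^2 - ‖z-β‖^2
      = (1 - ‖β‖^2) * (1 - ‖z‖ ^2) := by
    rw [Complex.sq_norm, Complex.sq_norm, Complex.sq_norm, Complex.sq_norm]
    simp [Complex.normSq_apply, Complex.sub_re, Complex.sub_im, Complex.mul_re, Complex.mul_im]
    ring
  have h1 : 0 < 1 - ‖β‖^2 := by nlinarith [norm_nonneg β]
  have h2 : 0 < 1 - ‖z‖^2 := by nlinarith [norm_nonneg z]
  have hsq : ‖z-β‖^2 < ‖1 - (starRingEnd ℂ) β * z‖^2 := by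
    nlinarith [mul_pos h1 h2]
  exact lt_of_pow_lt_pow_left₀ 2 (norm_nonneg _) hsq

lemma memball {z : ℂ} : z ∈ ball (0:ℂ) 1 ↔ ‖z‖ < 1 := by
  simp [mem_ball, Complex.dist_eq]

lemma mob_diff (α β : ℂ) (hβ : ‖β‖ < 1) :
    DifferentiableOn ℂ (fun z => α * (z - β) / (1 - (starRingEnd ℂ) β * z)) (ball (0:ℂ) 1) := by
  apply DifferentiableOn.div
  · exact (((differentiable_id.sub_const β).const_mul α)).differentiableOn
  · exact ((differentiable_const (1:ℂ)).sub (differentiable_id.const_mul _)).differentiableOn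
  · intro z hz
    exact denom_ne hβ (memball.mp hz)

lemma reC {z : ℂ} (hz : z ≠ 1) :
    ((1+z)/(1-z)).re = (1 - ‖z‖ ^2)/(‖1-z‖)^2 := by
  have h : (1:ℂ) - z ≠ 0 := sub_ne_zero.mpr (Ne.symm hz)
  rw [Complex.div_re, Complex.sq_norm, Complex.normSq_apply, Complex.normSq_apply]
  simp [Complex.sq_norm, Complex.normSq_apply]
  ring_nf

lemma stolz_iff {z : ℂ} (hz : ‖z‖ < 1) {M : ℝ} (hM : 0 < M) :
    (‖1-z‖)^2 < M * (1 - (‖z‖)^2) ↔ 1/M < ((1+z)/(1-z)).re := by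
  have hz1 : z ≠ 1 := by intro h; rw [h] at hz; simp at hz
  have hne : (1:ℂ) - z ≠ 0 := sub_ne_zero.mpr (Ne.symm hz1)
  have h1 : 0 < (‖1-z‖)^2 := pow_pos (norm_pos_iff.mpr hne) 2
  rw [reC hz1, div_lt_div_iff₀ hM h1]
  constructor <;> intro h <;> nlinarith

lemma mob_inv (α β z : ℂ) (hα : ‖α‖ = 1) (hβ : ‖β‖ < 1)
    (hz : ‖z‖ < 1) :
    (starRingEnd ℂ) α * (α * (z - β) / (1 - (starRingEnd ℂ) β * z) + α * β) /
      (1 + (starRingEnd ℂ) α * (starRingEnd ℂ) β * (α * (z - β) / (1 - (starRingEnd ℂ) β * z)))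
      = z := by
  have hD : 1 - (starRingEnd ℂ) β * z ≠ 0 := denom_ne hβ hz
  have hββ := bb_ne hβ
  have hαα := aa_one hα
  have hD' : 1 - z * (starRingEnd ℂ) β ≠ 0 := by rwa [mul_comm]
  have e1 : α * (z - β) / (1 - (starRingEnd ℂ) β * z) + α * β
      = α * z * (1 - β * (starRingEnd ℂ) β) / (1 - (starRingEnd ℂ) β * z) := by
    field_simp
    ring
  have e2 : 1 + (starRingEnd ℂ) α * (starRingEnd ℂ) β * (α * (z - β) / (1 - (starRingEnd ℂ) β * z))
      = (1 - β * (starRingEnd ℂ) β) / (1 - (starRingEnd ℂ) β * z) := by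
    field_simp
    linear_combination ((starRingEnd ℂ) β * (z - β)) * hαα
  rw [e1, e2]
  field_simp
  linear_combination z * hαα

lemma mob_inv' (α β z : ℂ) (hα : ‖α‖ = 1) (hβ : ‖β‖ < 1)
    (hz : ‖z‖ < 1) :
    α * ((starRingEnd ℂ) α * (z + α * β) / (1 + (starRingEnd ℂ) α * (starRingEnd ℂ) β * z) - β) /
      (1 - (starRingEnd ℂ) β *
        ((starRingEnd ℂ) α * (z + α * β) / (1 + (starRingEnd ℂ) α * (starRingEnd ℂ) β * z)))
      = z := by
  have hαα := aa_one hα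
  have hββ := bb_ne hβ
  have hD : 1 + (starRingEnd ℂ) α * (starRingEnd ℂ) β * z ≠ 0 := by
    have h := denom_ne (β := -(α*β)) (z := z) ?_ hz
    · rw [map_neg, map_mul, neg_mul, sub_neg_eq_add] at h
      intro hc; apply h
      rw [← hc]
    · rw [norm_neg, norm_mul, hα, one_mul]; exact hβ
  have hD' : 1 + (starRingEnd ℂ) α * z * (starRingEnd ℂ) β ≠ 0 := by rwa [mul_right_comm]
  have hD'' : 1 + (starRingEnd ℂ) β * (starRingEnd ℂ) α * z ≠ 0 := by rwa [mul_comm ((starRingEnd ℂ) β)]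
  have e1 : (starRingEnd ℂ) α * (z + α * β) / (1 + (starRingEnd ℂ) α * (starRingEnd ℂ) β * z) - β
      = (starRingEnd ℂ) α * z * (1 - β * (starRingEnd ℂ) β)
        / (1 + (starRingEnd ℂ) α * (starRingEnd ℂ) β * z) := by
    field_simp
    linear_combination β * hαα
  have e2 : 1 - (starRingEnd ℂ) β *
        ((starRingEnd ℂ) α * (z + α * β) / (1 + (starRingEnd ℂ) α * (starRingEnd ℂ) β * z))
      = (1 - β * (starRingEnd ℂ) β) / (1 + (starRingEnd ℂ) α * (starRingEnd ℂ) β * z) := by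
    field_simp
    linear_combination (-((starRingEnd ℂ) β * β)) * hαα
  rw [e1, e2]
  field_simp
  linear_combination z * hαα

lemma ddd {A B D : ℂ} (hD : D ≠ 0) : (A/D)/(B/D) = A/B := by
  rcases eq_or_ne B 0 with h | h
  · simp [h]
  · field_simp

set_option maxHeartbeats 1000000 in
/-- For `a ∈ ℝ`, `b ∈ (0,1]`, the Möbius map `ψ(z) = α(z-β)/(1-β̄z)` with
`α = (1+b+ia)/(1+b-ia)`, `β = (1-b+ia)/(1+b+ia)` is a holomorphic automorphism of the unit
disc whose inverse maps every Stolz-type region `{z : |1-z|² < M(1-|z|²)}` into itself. -/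
theorem stmt_15 (a b : ℝ) (hb0 : 0 < b) (hb1 : b ≤ 1) (α β : ℂ) (ψ : ℂ → ℂ)
    (hα : α = (1 + (b : ℂ) + Complex.I * (a : ℂ)) / (1 + (b : ℂ) - Complex.I * (a : ℂ)))
    (hβ : β = (1 - (b : ℂ) + Complex.I * (a : ℂ)) / (1 + (b : ℂ) + Complex.I * (a : ℂ)))
    (hψ : ∀ z, ψ z = α * (z - β) / (1 - (starRingEnd ℂ) β * z)) :
    DifferentiableOn ℂ ψ (ball (0 : ℂ) 1) ∧
    MapsTo ψ (ball (0 : ℂ) 1) (ball (0 : ℂ) 1) ∧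
    ∃ φ : ℂ → ℂ,
      DifferentiableOn ℂ φ (ball (0 : ℂ) 1) ∧
      MapsTo φ (ball (0 : ℂ) 1) (ball (0 : ℂ) 1) ∧
      (∀ z ∈ ball (0 : ℂ) 1, φ (ψ z) = z ∧ ψ (φ z) = z) ∧
      ∀ M : ℝ, 0 < M →
        MapsTo φ
          {z : ℂ | z ∈ ball (0 : ℂ) 1 ∧
            ‖1 - z‖ ^ 2 < M * (1 - ‖z‖ ^ 2)}
          {z : ℂ | z ∈ ball (0 : ℂ) 1 ∧
            ‖1 - z‖ ^ 2 < M * (1 - ‖z‖ ^ 2)} := by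
  have d2 : (1 + (b:ℂ) + Complex.I * a) ≠ 0 := by
    intro h
    have := congrArg Complex.re h
    simp at this
    linarith
  have d1 : (1 + (b:ℂ) - Complex.I * a) ≠ 0 := by
    intro h
    have := congrArg Complex.re h
    simp at this
    linarith
  have habs : ‖1 + (b:ℂ) + Complex.I * a‖ = ‖1 + (b:ℂ) - Complex.I * a‖ := by
    rw [Complex.norm_def, Complex.norm_def]
    congr 1
    simp [Complex.normSq_apply]
  have hαabs : ‖α‖ = 1 := by
    rw [hα, norm_div, habs, div_self (norm_ne_zero_iff.mpr d1)]
  have hβabs : ‖β‖ < 1 := by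
    rw [hβ, norm_div, div_lt_one (norm_pos_iff.mpr d2)]
    apply lt_of_pow_lt_pow_left₀ 2 (norm_nonneg _)
    rw [Complex.sq_norm, Complex.sq_norm]
    simp [Complex.normSq_apply]
    nlinarith
  -- the inverse map data
  set α' : ℂ := (1 + (b:ℂ) - Complex.I * a) / (1 + (b:ℂ) + Complex.I * a) with hα'
  set β' : ℂ := -((1 - (b:ℂ) + Complex.I * a) / (1 + (b:ℂ) - Complex.I * a)) with hβ'
  have hα'abs : ‖α'‖ = 1 := by
    rw [hα', norm_div, ← habs, div_self (norm_ne_zero_iff.mpr d2)]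
  have hβ'abs : ‖β'‖ < 1 := by
    rw [hβ', norm_neg, norm_div, div_lt_one (norm_pos_iff.mpr d1)]
    apply lt_of_pow_lt_pow_left₀ 2 (norm_nonneg _)
    rw [Complex.sq_norm, Complex.sq_norm]
    simp [Complex.normSq_apply]
    nlinarith
  set φ : ℂ → ℂ := fun w => α' * (w - β') / (1 - (starRingEnd ℂ) β' * w) with hφ
  have hcβ' : (starRingEnd ℂ) β' = -((1 - (b:ℂ) - Complex.I * a) / (1 + (b:ℂ) + Complex.I * a)) := by
    rw [hβ', map_neg, map_div₀]
    simp [map_add, map_sub, Complex.conj_I, Complex.conj_ofReal]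
    ring_nf
  have hA : (starRingEnd ℂ) α = α' := by
    rw [hα, hα', map_div₀]
    simp [map_add, map_sub, Complex.conj_I, Complex.conj_ofReal]
    ring_nf
  have hB : -(α * β) = β' := by
    rw [hα, hβ, hβ']
    field_simp
  have hψdiff : DifferentiableOn ℂ ψ (ball (0:ℂ) 1) :=
    (mob_diff α β hβabs).congr (fun z _ => hψ z)
  have hψmaps : MapsTo ψ (ball (0:ℂ) 1) (ball (0:ℂ) 1) := by
    intro z hz
    rw [memball] at hz ⊢
    rw [hψ]
    exact mob_abs_lt hαabs hβabs hz
  have hφmaps : MapsTo φ (ball (0:ℂ) 1) (ball (0:ℂ) 1) := by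
    intro z hz
    rw [memball] at hz ⊢
    exact mob_abs_lt hα'abs hβ'abs hz
  refine ⟨hψdiff, hψmaps, φ, mob_diff α' β' hβ'abs, hφmaps, ?_, ?_⟩
  · intro z hz
    rw [memball] at hz
    have hψz : ‖ψ z‖ < 1 := by rw [hψ]; exact mob_abs_lt hαabs hβabs hz
    constructor
    · have step : φ (ψ z) = (starRingEnd ℂ) α * (ψ z + α * β) /
          (1 + (starRingEnd ℂ) α * (starRingEnd ℂ) β * ψ z) := by
        show α' * (ψ z - β') / (1 - (starRingEnd ℂ) β' * ψ z) = _
        rw [← hA, ← hB, map_neg, map_mul]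
        ring
      rw [step, hψ z]
      exact mob_inv α β z hαabs hβabs hz
    · have hφz_eq : φ z = (starRingEnd ℂ) α * (z + α * β) /
          (1 + (starRingEnd ℂ) α * (starRingEnd ℂ) β * z) := by
        show α' * (z - β') / (1 - (starRingEnd ℂ) β' * z) = _
        rw [← hA, ← hB, map_neg, map_mul]
        ring
      rw [hψ (φ z), hφz_eq]
      exact mob_inv' α β z hαabs hβabs hz
  · intro M hM w hw
    obtain ⟨hwball, hwst⟩ := hw
    rw [memball] at hwball
    have hφw : ‖φ w‖ < 1 := mob_abs_lt hα'abs hβ'abs hwball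
    have hd4 : 1 - (starRingEnd ℂ) β' * w ≠ 0 := denom_ne hβ'abs hwball
    have hw1 : w ≠ 1 := by intro h; rw [h] at hwball; simp at hwball
    have hφw1 : φ w ≠ 1 := by intro h; rw [h] at hφw; simp at hφw
    have h6 : (1:ℂ) - w ≠ 0 := sub_ne_zero.mpr (Ne.symm hw1)
    have h5 : (1:ℂ) - φ w ≠ 0 := sub_ne_zero.mpr (Ne.symm hφw1)
    have hbC : (b:ℂ) ≠ 0 := by exact_mod_cast hb0.ne'
    have hd4' : 1 - w * (starRingEnd ℂ) β' ≠ 0 := by rwa [mul_comm]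
    have hnum : 1 + φ w = ((1 - (starRingEnd ℂ) β' * w) + α' * (w - β')) /
        (1 - (starRingEnd ℂ) β' * w) := by
      show 1 + α' * (w - β') / (1 - (starRingEnd ℂ) β' * w) = _
      field_simp
    have hden : 1 - φ w = ((1 - (starRingEnd ℂ) β' * w) - α' * (w - β')) /
        (1 - (starRingEnd ℂ) β' * w) := by
      show 1 - α' * (w - β') / (1 - (starRingEnd ℂ) β' * w) = _
      field_simp
    have hBne : (1 - (starRingEnd ℂ) β' * w) - α' * (w - β') ≠ 0 := by
      intro h
      apply h5
      rw [hden, h, zero_div]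
    have key : (1 + φ w)/(1 - φ w) = ((1+w)/(1-w) + Complex.I * a)/(b:ℂ) := by
      rw [hnum, hden, ddd hd4, div_eq_div_iff hBne hbC]
      rw [hcβ', hα', hβ']
      field_simp
      ring
    have hre : ((1 + φ w)/(1 - φ w)).re = (((1+w)/(1-w)).re)/b := by
      rw [key, Complex.div_ofReal_re]
      congr 1
      simp
    rw [stolz_iff hwball hM] at hwst
    refine ⟨memball.mpr hφw, ?_⟩
    rw [stolz_iff hφw hM, hre]
    have hX : ((1+w)/(1-w)).re ≤ ((1+w)/(1-w)).re / b := by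
      rw [le_div_iff₀ hb0]
      nlinarith [one_div_pos.mpr hM]
    linarith
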